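/- T(2,1,2) = (\pi^2/6)\zeta(3) - (3/2)\zeta(5), i.e., \sum_{n,m \ge 1} 1/(n^2 m (n+m)^2) = \zeta(2)\zeta(3) - (3/2)\zeta(5). -/

import Mathlib

open Function Filter Topology

/-- The Tornheim double series with natural number exponents. -/
noncomputable def tornheimN (a b c : ℕ) : ℝ :=
  ∑' n : ℕ+, ∑' m : ℕ+,
    1 / (((n : ℕ) : ℝ) ^ a * ((m : ℕ) : ℝ) ^ b * (((n : ℕ) + (m : ℕ) : ℕ) : ℝ) ^ c)

namespace T212

noncomputable def TF (a b c : ℕ) (p : ℕ+ × ℕ+) : ℝ :=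
  1 / (((p.1:ℕ):ℝ)^a * ((p.2:ℕ):ℝ)^b * (((p.1:ℕ):ℝ) + ((p.2:ℕ):ℝ))^c)

noncomputable def z (k : ℕ) : ℝ := ∑' n : ℕ+, 1 / ((n:ℕ):ℝ)^k

noncomputable def Hc (c : ℕ) : ℝ := ∑ i ∈ Finset.range c, (1 / (i + 1 : ℝ))

lemma pnat_pos (n : ℕ+) : (0:ℝ) < ((n:ℕ):ℝ) := by exact_mod_cast n.pos

lemma TF_nonneg (a b c : ℕ) (p : ℕ+ × ℕ+) : 0 ≤ TF a b c p := by
  unfold TF; positivity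

lemma summable_zP {a : ℕ} (ha : 2 ≤ a) : Summable (fun n : ℕ+ => 1 / ((n:ℕ):ℝ)^a) :=
  (Real.summable_one_div_nat_pow.mpr (by omega)).comp_injective PNat.coe_injective

lemma summable_prod_pow {a b : ℕ} (ha : 2 ≤ a) (hb : 2 ≤ b) :
    Summable (fun p : ℕ+ × ℕ+ => 1 / ((p.1:ℕ):ℝ)^a * (1 / ((p.2:ℕ):ℝ)^b)) :=
  (summable_zP ha).mul_of_nonneg (summable_zP hb)
    (fun _ => by positivity) (fun _ => by positivity)

lemma TF_le (a b c c1 c2 : ℕ) (h : c1 + c2 = c) (p : ℕ+ × ℕ+) :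
    TF a b c p ≤ 1 / ((p.1:ℕ):ℝ)^(a+c1) * (1 / ((p.2:ℕ):ℝ)^(b+c2)) := by
  obtain ⟨n, m⟩ := p
  have hx := pnat_pos n
  have hy := pnat_pos m
  have key : ((n:ℕ):ℝ)^c1 * ((m:ℕ):ℝ)^c2 ≤ (((n:ℕ):ℝ) + ((m:ℕ):ℝ))^c := by
    calc ((n:ℕ):ℝ)^c1 * ((m:ℕ):ℝ)^c2
        ≤ (((n:ℕ):ℝ) + ((m:ℕ):ℝ))^c1 * (((n:ℕ):ℝ) + ((m:ℕ):ℝ))^c2 := by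
          gcongr <;> linarith
      _ = (((n:ℕ):ℝ) + ((m:ℕ):ℝ))^c := by rw [← pow_add, h]
  have h2 : ((n:ℕ):ℝ)^a * ((m:ℕ):ℝ)^b * (((n:ℕ):ℝ)^c1 * ((m:ℕ):ℝ)^c2)
      ≤ ((n:ℕ):ℝ)^a * ((m:ℕ):ℝ)^b * (((n:ℕ):ℝ) + ((m:ℕ):ℝ))^c := by
    gcongr
  have h3 : (0:ℝ) < ((n:ℕ):ℝ)^a * ((m:ℕ):ℝ)^b * (((n:ℕ):ℝ)^c1 * ((m:ℕ):ℝ)^c2) := by positivity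
  calc TF a b c (n, m) ≤ 1 / (((n:ℕ):ℝ)^a * ((m:ℕ):ℝ)^b * (((n:ℕ):ℝ)^c1 * ((m:ℕ):ℝ)^c2)) := by
        unfold TF; exact one_div_le_one_div_of_le h3 h2
    _ = 1 / ((n:ℕ):ℝ)^(a+c1) * (1 / ((m:ℕ):ℝ)^(b+c2)) := by
        rw [pow_add, pow_add]; field_simp

lemma summable_TF {a b c c1 c2 : ℕ} (h : c1 + c2 = c) (ha : 2 ≤ a + c1) (hb : 2 ≤ b + c2) :
    Summable (TF a b c) :=
  Summable.of_nonneg_of_le (TF_nonneg a b c) (TF_le a b c c1 c2 h) (summable_prod_pow ha hb)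

lemma S212 : Summable (TF 2 1 2) := summable_TF (c1 := 1) (c2 := 1) rfl (by norm_num) (by norm_num)
lemma S113 : Summable (TF 1 1 3) := summable_TF (c1 := 1) (c2 := 2) rfl (by norm_num) (by norm_num)
lemma S203 : Summable (TF 2 0 3) := summable_TF (c1 := 0) (c2 := 3) rfl (by norm_num) (by norm_num)
lemma S014 : Summable (TF 0 1 4) := summable_TF (c1 := 2) (c2 := 2) rfl (by norm_num) (by norm_num)
lemma S104 : Summable (TF 1 0 4) := summable_TF (c1 := 2) (c2 := 2) rfl (by norm_num) (by norm_num)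
lemma S302 : Summable (TF 3 0 2) := summable_TF (c1 := 0) (c2 := 2) rfl (by norm_num) (by norm_num)
lemma S023 : Summable (TF 0 2 3) := summable_TF (c1 := 2) (c2 := 1) rfl (by norm_num) (by norm_num)
lemma S032 : Summable (TF 0 3 2) := summable_TF (c1 := 2) (c2 := 0) rfl (by norm_num) (by norm_num)
lemma S311 : Summable (TF 3 1 1) := summable_TF (c1 := 0) (c2 := 1) rfl (by norm_num) (by norm_num)

/-! ### pointwise identities -/

lemma split212 (p : ℕ+ × ℕ+) : TF 2 1 2 p = TF 1 1 3 p + TF 2 0 3 p := by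
  obtain ⟨n, m⟩ := p
  have hx := pnat_pos n; have hy := pnat_pos m
  unfold TF
  simp only
  rw [div_add_div _ _ (by positivity) (by positivity),
    div_eq_div_iff (by positivity) (by positivity)]
  ring

lemma split113 (p : ℕ+ × ℕ+) : TF 1 1 3 p = TF 0 1 4 p + TF 1 0 4 p := by
  obtain ⟨n, m⟩ := p
  have hx := pnat_pos n; have hy := pnat_pos m
  unfold TF
  simp only
  rw [div_add_div _ _ (by positivity) (by positivity),
    div_eq_div_iff (by positivity) (by positivity)]
  ring

lemma split311 (p : ℕ+ × ℕ+) : TF 3 1 1 p = TF 2 1 2 p + TF 3 0 2 p := by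
  obtain ⟨n, m⟩ := p
  have hx := pnat_pos n; have hy := pnat_pos m
  unfold TF
  simp only
  rw [div_add_div _ _ (by positivity) (by positivity),
    div_eq_div_iff (by positivity) (by positivity)]
  ring

lemma shuffle_pointwise (p : ℕ+ × ℕ+) :
    1 / ((p.1:ℕ):ℝ)^2 * (1 / ((p.2:ℕ):ℝ)^3)
      = 3 * TF 1 0 4 p + TF 2 0 3 p + 3 * TF 0 1 4 p + 2 * TF 0 2 3 p + TF 0 3 2 p := by
  obtain ⟨n, m⟩ := p
  have hx := pnat_pos n; have hy := pnat_pos m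
  unfold TF
  simp only
  have hxy : (0:ℝ) < ((n:ℕ):ℝ) + ((m:ℕ):ℝ) := by positivity
  field_simp
  ring

lemma sym_TF (b c : ℕ) : (∑' p : ℕ+ × ℕ+, TF 0 b c p) = ∑' p : ℕ+ × ℕ+, TF b 0 c p := by
  rw [← (Equiv.prodComm ℕ+ ℕ+).tsum_eq (TF 0 b c)]
  apply tsum_congr
  intro p
  unfold TF
  simp only [Equiv.prodComm_apply, Prod.fst_swap, Prod.snd_swap, pow_zero]
  rw [add_comm]
  ring_nf

/-! ### reindexing lemmas -/

lemma tsum_ite_lt (F : ℕ+ × ℕ+ → ℝ) :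
    ∑' p : ℕ+ × ℕ+, (if p.2 < p.1 then F p else 0)
      = ∑' q : ℕ+ × ℕ+, F (q.1 + q.2, q.1) := by
  apply tsum_eq_tsum_of_ne_zero_bij
    (fun q => ((q:ℕ+ × ℕ+).1 + (q:ℕ+ × ℕ+).2, (q:ℕ+ × ℕ+).1))
  · rintro ⟨⟨a,b⟩,hq⟩ ⟨⟨c,d⟩,hr⟩ h
    simp only [Prod.mk.injEq] at h
    obtain ⟨h1, h2⟩ := h
    subst h2
    have : b = d := add_left_cancel h1
    simp [this]
  · rintro ⟨a, b⟩ hp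
    simp only [mem_support, ne_eq, ite_eq_right_iff, not_forall] at hp
    obtain ⟨hlt, hne⟩ := hp
    refine ⟨⟨(b, a - b), ?_⟩, ?_⟩
    · simp only [mem_support, ne_eq]
      rw [PNat.add_sub_of_lt hlt]
      exact hne
    · simp only []
      rw [PNat.add_sub_of_lt hlt]
  · rintro ⟨⟨a, b⟩, hq⟩
    simp only []
    rw [if_pos (PNat.lt_add_right a b)]

lemma tsum_ite_gt (F : ℕ+ × ℕ+ → ℝ) :
    ∑' p : ℕ+ × ℕ+, (if p.1 < p.2 then F p else 0)
      = ∑' q : ℕ+ × ℕ+, F (q.1, q.1 + q.2) := by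
  apply tsum_eq_tsum_of_ne_zero_bij
    (fun q => ((q:ℕ+ × ℕ+).1, (q:ℕ+ × ℕ+).1 + (q:ℕ+ × ℕ+).2))
  · rintro ⟨⟨a,b⟩,hq⟩ ⟨⟨c,d⟩,hr⟩ h
    simp only [Prod.mk.injEq] at h
    obtain ⟨h1, h2⟩ := h
    subst h1
    have : b = d := add_left_cancel h2
    simp [this]
  · rintro ⟨a, b⟩ hp
    simp only [mem_support, ne_eq, ite_eq_right_iff, not_forall] at hp
    obtain ⟨hlt, hne⟩ := hp
    refine ⟨⟨(a, b - a), ?_⟩, ?_⟩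
    · simp only [mem_support, ne_eq]
      rw [PNat.add_sub_of_lt hlt]
      exact hne
    · simp only []
      rw [PNat.add_sub_of_lt hlt]
  · rintro ⟨⟨a, b⟩, hq⟩
    simp only []
    rw [if_pos (PNat.lt_add_right a b)]

lemma tsum_ite_diag (F : ℕ+ × ℕ+ → ℝ) :
    ∑' p : ℕ+ × ℕ+, (if p.1 = p.2 then F p else 0) = ∑' n : ℕ+, F (n, n) := by
  apply tsum_eq_tsum_of_ne_zero_bij (fun n => ((n:ℕ+), (n:ℕ+)))
  · rintro ⟨a, ha⟩ ⟨b, hb⟩ h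
    simp only [Prod.mk.injEq] at h
    simp [h.1]
  · rintro ⟨a, b⟩ hp
    simp only [mem_support, ne_eq, ite_eq_right_iff, not_forall] at hp
    obtain ⟨heq, hne⟩ := hp
    subst heq
    exact ⟨⟨a, hne⟩, rfl⟩
  · rintro ⟨a, ha⟩
    simp

/-! ### telescoping -/

lemma partial_sum_eq (c : ℕ) (hc : 0 < c) (M : ℕ) :
    ∑ j ∈ Finset.range M, 1 / ((j + 1 : ℝ) * ((j + 1 : ℝ) + c))
      = (Hc c - ∑ j ∈ Finset.range c, 1 / ((M : ℝ) + j + 1)) / c := by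
  have hcr : (0:ℝ) < (c:ℝ) := by exact_mod_cast hc
  have hterm : ∀ j : ℕ, 1 / ((j + 1 : ℝ) * ((j + 1 : ℝ) + c))
      = (1 / (j + 1 : ℝ) - 1 / ((j + 1 : ℝ) + c)) / c := by
    intro j
    have h1 : (0:ℝ) < (j + 1 : ℝ) := by positivity
    have h2 : (0:ℝ) < (j + 1 : ℝ) + c := by positivity
    field_simp
    ring
  rw [Finset.sum_congr rfl fun j _ => hterm j, ← Finset.sum_div]
  congr 1
  rw [Finset.sum_sub_distrib]
  have key : ∑ j ∈ Finset.range M, 1 / ((j + 1 : ℝ) + c)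
      = ∑ j ∈ Finset.range M, (1 / (j + 1 : ℝ)) + ∑ j ∈ Finset.range c, 1 / ((M : ℝ) + j + 1)
        - Hc c := by
    have e1 : ∑ i ∈ Finset.range (c + M), (1 / (i + 1 : ℝ))
        = Hc c + ∑ j ∈ Finset.range M, (1 / ((c + j : ℕ) + 1 : ℝ)) := by
      rw [Finset.sum_range_add]; rfl
    have e2 : ∑ i ∈ Finset.range (M + c), (1 / (i + 1 : ℝ))
        = (∑ j ∈ Finset.range M, (1 / (j + 1 : ℝ)))
          + ∑ j ∈ Finset.range c, (1 / ((M + j : ℕ) + 1 : ℝ)) := by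
      rw [Finset.sum_range_add]
    have e3 : ∑ j ∈ Finset.range M, (1 / ((c + j : ℕ) + 1 : ℝ))
        = ∑ j ∈ Finset.range M, 1 / ((j + 1 : ℝ) + c) := by
      apply Finset.sum_congr rfl; intro j _; push_cast; ring_nf
    have e4 : ∑ j ∈ Finset.range c, (1 / ((M + j : ℕ) + 1 : ℝ))
        = ∑ j ∈ Finset.range c, 1 / ((M : ℝ) + j + 1) := by
      apply Finset.sum_congr rfl; intro j _; push_cast; ring_nf
    have e5 : c + M = M + c := by omega
    rw [e5, e2] at e1
    rw [e3, e4] at e1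
    linarith
  rw [key]
  ring

lemma hasSum_aux (c : ℕ) (hc : 0 < c) :
    HasSum (fun j : ℕ => 1 / ((j + 1 : ℝ) * ((j + 1 : ℝ) + c))) (Hc c / c) := by
  rw [hasSum_iff_tendsto_nat_of_nonneg (fun j => by positivity)]
  have heq : (fun M : ℕ => ∑ j ∈ Finset.range M, 1 / ((j + 1 : ℝ) * ((j + 1 : ℝ) + c)))
      = fun M : ℕ => (Hc c - ∑ j ∈ Finset.range c, 1 / ((M : ℝ) + j + 1)) / c := by
    funext M; exact partial_sum_eq c hc M
  rw [heq]
  have h0 : Tendsto (fun M : ℕ => ∑ j ∈ Finset.range c, 1 / ((M : ℝ) + j + 1)) atTop (𝓝 0) := by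
    have h1 : Tendsto (fun M : ℕ => ∑ j ∈ Finset.range c, 1 / ((M : ℝ) + j + 1)) atTop
        (𝓝 (∑ j ∈ Finset.range c, (0:ℝ))) := by
      apply tendsto_finset_sum
      intro j _
      have ht : Tendsto (fun M : ℕ => ((M : ℝ) + j + 1)) atTop atTop := by
        apply tendsto_atTop_add_const_right
        apply tendsto_atTop_add_const_right
        exact tendsto_natCast_atTop_atTop
      have := ht.inv_tendsto_atTop; simp only [one_div]; exact this
    simpa using h1
  have := ((tendsto_const_nhds (x := Hc c) (f := atTop)).sub h0).div_const (c:ℝ)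
  simpa using this

lemma telescope_pnat (n : ℕ+) :
    ∑' m : ℕ+, 1 / (((m:ℕ):ℝ) * (((m:ℕ):ℝ) + ((n:ℕ):ℝ))) = Hc (n:ℕ) / ((n:ℕ):ℝ) := by
  have h := hasSum_aux (n:ℕ) n.pos
  have h2 : HasSum (fun m : ℕ+ => 1 / (((m:ℕ):ℝ) * (((m:ℕ):ℝ) + ((n:ℕ):ℝ))))
      (Hc (n:ℕ) / ((n:ℕ):ℝ)) := by
    rw [← Equiv.hasSum_iff Equiv.pnatEquivNat.symm]
    have hfe : ((fun m : ℕ+ => 1 / (((m:ℕ):ℝ) * (((m:ℕ):ℝ) + ((n:ℕ):ℝ))))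
        ∘ Equiv.pnatEquivNat.symm)
        = fun j : ℕ => 1 / ((j + 1 : ℝ) * ((j + 1 : ℝ) + (n:ℕ))) := by
      funext j
      simp only [Function.comp_apply, Equiv.pnatEquivNat_symm_apply, Nat.succPNat_coe]
      push_cast
      ring_nf
    rw [hfe]
    exact h
  exact h2.tsum_eq

/-! ### inner indicator sum -/

lemma inner_indicator (n : ℕ+) :
    ∑' m : ℕ+, (if m ≤ n then 1 / (((n:ℕ):ℝ)^4 * ((m:ℕ):ℝ)) else 0)
      = 1 / ((n:ℕ):ℝ)^4 * Hc (n:ℕ) := by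
  rw [tsum_eq_sum (s := (Finset.range (n:ℕ)).map ⟨Nat.succPNat, Nat.succPNat_injective⟩)
    (by
      intro m hm
      rw [if_neg]
      intro hle
      apply hm
      rw [Finset.mem_map]
      refine ⟨m.natPred, ?_, PNat.succPNat_natPred m⟩
      rw [Finset.mem_range]
      have h1 : (m:ℕ) ≤ (n:ℕ) := hle
      have hm1 : 1 ≤ (m:ℕ) := m.one_le
      have h2 : m.natPred = (m:ℕ) - 1 := rfl
      omega)]
  rw [Finset.sum_map]
  unfold Hc
  rw [Finset.mul_sum]
  apply Finset.sum_congr rfl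
  intro i hi
  have hin : i < (n:ℕ) := Finset.mem_range.mp hi
  have hle : (Nat.succPNat i) ≤ n := by
    rw [← PNat.coe_le_coe]
    simp [Nat.succPNat]
    omega
  simp only [Function.Embedding.coeFn_mk]
  rw [if_pos hle]
  have hcoe : ((Nat.succPNat i : ℕ+) : ℕ) = i + 1 := rfl
  rw [hcoe]
  push_cast
  rw [one_div, mul_inv, ← one_div, ← one_div]

/-! ### product factorization -/

lemma tsum_prod_pow {a b : ℕ} (ha : 2 ≤ a) (hb : 2 ≤ b) :
    ∑' p : ℕ+ × ℕ+, (1 / ((p.1:ℕ):ℝ)^a * (1 / ((p.2:ℕ):ℝ)^b)) = z a * z b := by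
  rw [Summable.tsum_prod (summable_prod_pow ha hb)]
  have h1 : ∀ n : ℕ+, ∑' m : ℕ+, (1 / ((n:ℕ):ℝ)^a * (1 / ((m:ℕ):ℝ)^b))
      = 1 / ((n:ℕ):ℝ)^a * z b := fun n => tsum_mul_left
  rw [tsum_congr h1]
  unfold z
  rw [tsum_mul_right]

/-! ### stuffle -/

lemma stuffle : z 3 * z 2
    = (∑' p : ℕ+ × ℕ+, TF 2 0 3 p) + (∑' p : ℕ+ × ℕ+, TF 3 0 2 p) + z 5 := by
  have hF : Summable (fun p : ℕ+ × ℕ+ => 1 / ((p.1:ℕ):ℝ)^3 * (1 / ((p.2:ℕ):ℝ)^2)) :=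
    summable_prod_pow (by norm_num) (by norm_num)
  have hSlt : Summable (fun p : ℕ+ × ℕ+ =>
      if p.2 < p.1 then 1 / ((p.1:ℕ):ℝ)^3 * (1 / ((p.2:ℕ):ℝ)^2) else 0) := by
    apply Summable.of_nonneg_of_le _ _ hF
    · intro p; split
      · positivity
      · exact le_rfl
    · intro p; split
      · exact le_rfl
      · positivity
  have hSgt : Summable (fun p : ℕ+ × ℕ+ =>
      if p.1 < p.2 then 1 / ((p.1:ℕ):ℝ)^3 * (1 / ((p.2:ℕ):ℝ)^2) else 0) := by
    apply Summable.of_nonneg_of_le _ _ hF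
    · intro p; split
      · positivity
      · exact le_rfl
    · intro p; split
      · exact le_rfl
      · positivity
  have hSdg : Summable (fun p : ℕ+ × ℕ+ =>
      if p.1 = p.2 then 1 / ((p.1:ℕ):ℝ)^3 * (1 / ((p.2:ℕ):ℝ)^2) else 0) := by
    apply Summable.of_nonneg_of_le _ _ hF
    · intro p; split
      · positivity
      · exact le_rfl
    · intro p; split
      · exact le_rfl
      · positivity
  have tri : ∀ p : ℕ+ × ℕ+, 1 / ((p.1:ℕ):ℝ)^3 * (1 / ((p.2:ℕ):ℝ)^2)
      = (if p.2 < p.1 then 1 / ((p.1:ℕ):ℝ)^3 * (1 / ((p.2:ℕ):ℝ)^2) else 0)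
        + ((if p.1 < p.2 then 1 / ((p.1:ℕ):ℝ)^3 * (1 / ((p.2:ℕ):ℝ)^2) else 0)
          + (if p.1 = p.2 then 1 / ((p.1:ℕ):ℝ)^3 * (1 / ((p.2:ℕ):ℝ)^2) else 0)) := by
    intro p
    rcases lt_trichotomy p.1 p.2 with h | h | h
    · rw [if_neg (by exact fun hh => absurd h (asymm hh)), if_pos h, if_neg h.ne]
      ring
    · rw [if_neg (by rw [h]; exact lt_irrefl _), if_neg (by rw [h]; exact lt_irrefl _), if_pos h]
      ring
    · rw [if_pos h, if_neg (asymm h), if_neg (ne_of_gt h)]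
      ring
  rw [← tsum_prod_pow (a := 3) (b := 2) (by norm_num) (by norm_num)]
  rw [tsum_congr tri, Summable.tsum_add hSlt (hSgt.add hSdg), Summable.tsum_add hSgt hSdg]
  rw [tsum_ite_lt, tsum_ite_gt, tsum_ite_diag]
  have e1 : ∑' q : ℕ+ × ℕ+, 1 / (((q.1 + q.2, q.1).1:ℕ):ℝ)^3 * (1 / (((q.1 + q.2, q.1).2:ℕ):ℝ)^2)
      = ∑' p : ℕ+ × ℕ+, TF 2 0 3 p := by
    apply tsum_congr
    rintro ⟨a, b⟩
    unfold TF
    simp only [pow_zero, mul_one, PNat.add_coe]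
    push_cast
    rw [div_mul_div_comm, one_mul]
    try ring_nf
  have e2 : ∑' q : ℕ+ × ℕ+, 1 / (((q.1, q.1 + q.2).1:ℕ):ℝ)^3 * (1 / (((q.1, q.1 + q.2).2:ℕ):ℝ)^2)
      = ∑' p : ℕ+ × ℕ+, TF 3 0 2 p := by
    apply tsum_congr
    rintro ⟨a, b⟩
    unfold TF
    simp only [pow_zero, mul_one, PNat.add_coe]
    push_cast
    rw [div_mul_div_comm, one_mul]
    try ring_nf
  have e3 : ∑' n : ℕ+, 1 / (((n, n).1:ℕ):ℝ)^3 * (1 / (((n, n).2:ℕ):ℝ)^2) = z 5 := by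
    unfold z
    apply tsum_congr
    intro n
    simp only
    rw [div_mul_div_comm, one_mul, ← pow_add]
  rw [e1, e2, e3]
  ring

/-! ### shuffle -/

lemma shuffle : z 2 * z 3
    = 6 * (∑' p : ℕ+ × ℕ+, TF 1 0 4 p) + 3 * (∑' p : ℕ+ × ℕ+, TF 2 0 3 p)
      + (∑' p : ℕ+ × ℕ+, TF 3 0 2 p) := by
  rw [← tsum_prod_pow (a := 2) (b := 3) (by norm_num) (by norm_num)]
  rw [tsum_congr shuffle_pointwise]
  rw [Summable.tsum_add ((((S104.mul_left 3).add S203).add (S014.mul_left 3)).add (S023.mul_left 2)) S032,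
    Summable.tsum_add (((S104.mul_left 3).add S203).add (S014.mul_left 3)) (S023.mul_left 2),
    Summable.tsum_add ((S104.mul_left 3).add S203) (S014.mul_left 3),
    Summable.tsum_add (S104.mul_left 3) S203,
    tsum_mul_left, tsum_mul_left, tsum_mul_left]
  rw [sym_TF 1 4, sym_TF 2 3, sym_TF 3 2]
  ring

/-! ### grouping / sum theorem input -/

lemma summable_hInd : Summable (fun p : ℕ+ × ℕ+ =>
    if p.2 ≤ p.1 then 1 / (((p.1:ℕ):ℝ)^4 * ((p.2:ℕ):ℝ)) else 0) := by
  apply Summable.of_nonneg_of_le _ _ (summable_prod_pow (a := 3) (b := 2) (by norm_num) (by norm_num))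
  · intro p; split
    · positivity
    · exact le_rfl
  · intro p
    split
    · rename_i hle
      have hx := pnat_pos p.1; have hy := pnat_pos p.2
      have hyx : ((p.2:ℕ):ℝ) ≤ ((p.1:ℕ):ℝ) := by exact_mod_cast hle
      rw [div_mul_div_comm, one_mul]
      apply one_div_le_one_div_of_le (by positivity)
      calc ((p.1:ℕ):ℝ)^3 * ((p.2:ℕ):ℝ)^2 = (((p.1:ℕ):ℝ)^3 * ((p.2:ℕ):ℝ)) * ((p.2:ℕ):ℝ) := by ring
        _ ≤ (((p.1:ℕ):ℝ)^3 * ((p.2:ℕ):ℝ)) * ((p.1:ℕ):ℝ) := by gcongr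
        _ = ((p.1:ℕ):ℝ)^4 * ((p.2:ℕ):ℝ) := by ring
    · positivity

lemma tsum_hInd : ∑' p : ℕ+ × ℕ+,
      (if p.2 ≤ p.1 then 1 / (((p.1:ℕ):ℝ)^4 * ((p.2:ℕ):ℝ)) else 0)
    = (∑' p : ℕ+ × ℕ+, TF 1 0 4 p) + z 5 := by
  have hSlt : Summable (fun p : ℕ+ × ℕ+ =>
      if p.2 < p.1 then 1 / (((p.1:ℕ):ℝ)^4 * ((p.2:ℕ):ℝ)) else 0) := by
    apply Summable.of_nonneg_of_le _ _ summable_hInd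
    · intro p; split
      · positivity
      · exact le_rfl
    · intro p; split
      · rename_i h; rw [if_pos h.le]
      · split
        · positivity
        · exact le_rfl
  have hSdg : Summable (fun p : ℕ+ × ℕ+ =>
      if p.1 = p.2 then 1 / (((p.1:ℕ):ℝ)^4 * ((p.2:ℕ):ℝ)) else 0) := by
    apply Summable.of_nonneg_of_le _ _ summable_hInd
    · intro p; split
      · positivity
      · exact le_rfl
    · intro p; split
      · rename_i h; rw [if_pos h.ge]
      · split
        · positivity
        · exact le_rfl
  have split : ∀ p : ℕ+ × ℕ+,
      (if p.2 ≤ p.1 then 1 / (((p.1:ℕ):ℝ)^4 * ((p.2:ℕ):ℝ)) else 0)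
        = (if p.2 < p.1 then 1 / (((p.1:ℕ):ℝ)^4 * ((p.2:ℕ):ℝ)) else 0)
          + (if p.1 = p.2 then 1 / (((p.1:ℕ):ℝ)^4 * ((p.2:ℕ):ℝ)) else 0) := by
    intro p
    rcases lt_trichotomy p.1 p.2 with h | h | h
    · rw [if_neg (not_le.mpr h), if_neg (by exact fun hh => absurd h (asymm hh)), if_neg h.ne]
      ring
    · rw [if_pos h.ge, if_neg (by rw [h]; exact lt_irrefl _), if_pos h]
      ring
    · rw [if_pos h.le, if_pos h, if_neg (ne_of_gt h)]
      ring
  rw [tsum_congr split, Summable.tsum_add hSlt hSdg, tsum_ite_lt, tsum_ite_diag]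
  have e1 : ∑' q : ℕ+ × ℕ+, 1 / ((((q.1 + q.2, q.1).1:ℕ):ℝ)^4 * (((q.1 + q.2, q.1).2:ℕ):ℝ))
      = ∑' p : ℕ+ × ℕ+, TF 1 0 4 p := by
    apply tsum_congr
    rintro ⟨a, b⟩
    unfold TF
    simp only [pow_zero, pow_one, mul_one, PNat.add_coe]
    push_cast
    ring_nf
  have e3 : ∑' n : ℕ+, 1 / ((((n, n).1:ℕ):ℝ)^4 * (((n, n).2:ℕ):ℝ)) = z 5 := by
    unfold z
    apply tsum_congr
    intro n
    simp only
    rw [← pow_succ]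
  rw [e1, e3]

lemma T311_eq : ∑' p : ℕ+ × ℕ+, TF 3 1 1 p = (∑' p : ℕ+ × ℕ+, TF 1 0 4 p) + z 5 := by
  rw [Summable.tsum_prod S311]
  have inner311 : ∀ n : ℕ+, ∑' m : ℕ+, TF 3 1 1 (n, m)
      = 1 / ((n:ℕ):ℝ)^4 * Hc (n:ℕ) := by
    intro n
    have hx := pnat_pos n
    have hterm : ∀ m : ℕ+, TF 3 1 1 (n, m)
        = 1 / ((n:ℕ):ℝ)^3 * (1 / (((m:ℕ):ℝ) * (((m:ℕ):ℝ) + ((n:ℕ):ℝ)))) := by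
      intro m
      have hy := pnat_pos m
      unfold TF
      simp only [pow_one]
      rw [div_mul_div_comm, one_mul]
      ring_nf
    rw [tsum_congr hterm, tsum_mul_left, telescope_pnat n]
    rw [div_mul_eq_mul_div, one_mul, div_div, div_mul_eq_mul_div, one_mul, ← pow_succ']
    try norm_num
  rw [tsum_congr inner311]
  rw [← tsum_hInd, Summable.tsum_prod summable_hInd]
  exact (tsum_congr fun n => (inner_indicator n).symm)

/-! ### main assembly -/

lemma tornheim_as_tsum : tornheimN 2 1 2 = ∑' p : ℕ+ × ℕ+, TF 2 1 2 p := by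
  rw [Summable.tsum_prod S212]
  unfold tornheimN
  apply tsum_congr
  intro n
  apply tsum_congr
  intro m
  unfold TF
  simp only
  push_cast
  ring_nf

lemma main_real : tornheimN 2 1 2 = z 2 * z 3 - 3/2 * z 5 := by
  have e1 : ∑' p : ℕ+ × ℕ+, TF 2 1 2 p
      = (∑' p : ℕ+ × ℕ+, TF 1 1 3 p) + ∑' p : ℕ+ × ℕ+, TF 2 0 3 p := by
    rw [← Summable.tsum_add S113 S203]; exact tsum_congr split212
  have e2 : ∑' p : ℕ+ × ℕ+, TF 1 1 3 p
      = (∑' p : ℕ+ × ℕ+, TF 0 1 4 p) + ∑' p : ℕ+ × ℕ+, TF 1 0 4 p := by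
    rw [← Summable.tsum_add S014 S104]; exact tsum_congr split113
  have e3 : ∑' p : ℕ+ × ℕ+, TF 3 1 1 p
      = (∑' p : ℕ+ × ℕ+, TF 2 1 2 p) + ∑' p : ℕ+ × ℕ+, TF 3 0 2 p := by
    rw [← Summable.tsum_add S212 S302]; exact tsum_congr split311
  have e4 := T311_eq
  have e5 := shuffle
  have e6 := stuffle
  have esym := sym_TF 1 4
  have hcomm : z 3 * z 2 = z 2 * z 3 := mul_comm _ _
  rw [tornheim_as_tsum]
  linarith [e1, e2, e3, e4, e5, e6, esym, hcomm]

lemma z_cast {k : ℕ} (hk : 1 < k) : ((z k : ℝ) : ℂ) = riemannZeta (k : ℂ) := by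
  rw [zeta_nat_eq_tsum_of_gt_one hk]
  have h1 : ∑' n : ℕ, 1 / (n:ℂ)^k = ∑' n : ℕ+, 1 / (((n:ℕ):ℂ))^k := by
    apply tsum_eq_tsum_of_ne_zero_bij (fun x => (((x : ℕ+) : ℕ)))
    · intro a b h
      exact Subtype.ext (PNat.coe_injective h)
    · intro n hn
      have hn0 : n ≠ 0 := by
        rintro rfl
        simp [zero_pow (by omega : k ≠ 0)] at hn
      refine ⟨⟨⟨n, Nat.pos_of_ne_zero hn0⟩, ?_⟩, rfl⟩
      exact hn
    · intro x
      rfl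
  rw [h1]
  unfold z
  rw [Complex.ofReal_tsum]
  apply tsum_congr
  intro n
  push_cast
  ring

end T212

theorem tornheim_212 :
    ((tornheimN 2 1 2 : ℝ) : ℂ)
      = ((Real.pi : ℂ) ^ 2 / 6) * riemannZeta 3 - (3 / 2) * riemannZeta 5 := by
  have h := T212.main_real
  have hc : ((tornheimN 2 1 2 : ℝ) : ℂ)
      = ((T212.z 2 : ℝ):ℂ) * ((T212.z 3 : ℝ):ℂ) - (3/2 : ℂ) * ((T212.z 5 : ℝ):ℂ) := by
    rw [h]; push_cast; ring
  rw [hc, T212.z_cast (by norm_num), T212.z_cast (by norm_num), T212.z_cast (by norm_num)]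
  have h2 : riemannZeta ((2:ℕ):ℂ) = (Real.pi:ℂ)^2/6 := by norm_num [riemannZeta_two]
  rw [h2]
  norm_num
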